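/- Let A be a finitely semi-free DG algebra on generators f_1,...,f_N and let Π = T_A(Res(A)^∨[-m]) be its (1-m)-Calabi-Yau completion, semi-free on generators {f_i, X_i := s^{-m}(sDf_i)^∨, c := s^{-m}E^∨}. Let ω ∈ Y^{(2)}(Π) be the element ω = Σ_i (-1)^{|f_i|+1}[ sDX_i ⊗ sDf_i + (-1)^{(|f_i|+1)(|X_i|+1)} sDf_i ⊗ sDX_i ] + [ sDc ⊗ E + E ⊗ sDc ]. Then the induced bimodule map ω^# : Res(Π)^∨ → Res(Π), given on the dual basis by (sDf_i)^∨ ↦ sDX_i, (sDX_i)^∨ ↦ (-1)^{m|f_i|+1} sDf_i, E^∨ ↦ sDc, (sDc)^∨ ↦ (-1)^{m+1} E, is an isomorphism of graded Π-bimodules (of degree 1-m). -/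
import Mathlib


noncomputable section

/-- Index set for the basis of `Res(Π)` (equivalently, for its dual basis in
`Res(Π)^∨`): `inl (inl i) ↔ sDf_i`, `inl (inr i) ↔ sDX_i`, `inr true ↔ E`,
`inr false ↔ sDc`. -/
abbrev CYIndex (N : ℕ) := (Fin N ⊕ Fin N) ⊕ Bool

/-- The involution matching each dual basis element with the basis element it is
sent to by `ω^#`: `(sDf_i)^∨ ↦ sDX_i`, `(sDX_i)^∨ ↦ sDf_i`, `E^∨ ↦ sDc`,
`(sDc)^∨ ↦ E`. -/
def cyRot (N : ℕ) : CYIndex N → CYIndex N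
  | .inl (.inl i) => .inl (.inr i)
  | .inl (.inr i) => .inl (.inl i)
  | .inr b => .inr (!b)

/-- The signs of `ω^#` on the dual basis:
`(sDf_i)^∨ ↦ sDX_i` (sign `+1`), `(sDX_i)^∨ ↦ (-1)^{m|f_i|+1}·sDf_i`,
`E^∨ ↦ sDc` (sign `+1`), `(sDc)^∨ ↦ (-1)^{m+1}·E`. -/
def cySign (k : Type*) [Field k] (N : ℕ) (m : ℤ) (deg : Fin N → ℤ) :
    CYIndex N → k
  | .inl (.inl _) => 1
  | .inl (.inr i) => (-1 : k) ^ (m * deg i + 1)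
  | .inr true => 1
  | .inr false => (-1 : k) ^ (m + 1)

/-- The map `ω^# : Res(Π)^∨ → Res(Π)` in the free-bimodule coordinates
`(CYIndex N → B)` (the coordinate module `B` standing for `Π ⊗ Π`): it sends the
dual basis to the basis by the signed permutation above. -/
def omegaSharp (k : Type*) [Field k] (B : Type*) [AddCommGroup B] [Module k B]
    (N : ℕ) (m : ℤ) (deg : Fin N → ℤ) :
    (CYIndex N → B) →ₗ[k] (CYIndex N → B) where
  toFun x i := cySign k N m deg i • x (cyRot N i)
  map_add' x y := by
    funext i
    simp [smul_add]
  map_smul' c x := by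
    funext i
    simp only [Pi.smul_apply, RingHom.id_apply]
    rw [smul_comm]

/-- Let `A` be a finitely semi-free DG algebra on generators
`f_1,…,f_N` (of degrees `deg i`) and `Π = T_A(Res(A)^∨[-m])` its `(1-m)`-Calabi–Yau
completion, semi-free on `{f_i, X_i, c}`, so that `Res(Π)` is free on the basis
`{sDf_i, sDX_i, sDc, E}` and `Res(Π)^∨` on the dual basis.  The bimodule map
`ω^# : Res(Π)^∨ → Res(Π)` induced by the canonical 2-form
`ω = Σᵢ(-1)^{|f_i|+1}[sDX_i⊗sDf_i ± sDf_i⊗sDX_i] + [sDc⊗E + E⊗sDc]`, given on the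
dual basis by `(sDf_i)^∨ ↦ sDX_i`, `(sDX_i)^∨ ↦ (-1)^{m|f_i|+1} sDf_i`,
`E^∨ ↦ sDc`, `(sDc)^∨ ↦ (-1)^{m+1} E`, permutes the free basis up to (nonzero)
signs and is therefore an isomorphism of graded `Π`-bimodules (of degree `1-m`). -/

lemma cyRot_invol (N : ℕ) (i : CYIndex N) : cyRot N (cyRot N i) = i := by
  rcases i with (i | i) | b
  · rfl
  · rfl
  · simp [cyRot]

lemma cySign_ne_zero (k : Type*) [Field k] (N : ℕ) (m : ℤ) (deg : Fin N → ℤ)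
    (i : CYIndex N) : cySign k N m deg i ≠ 0 := by
  rcases i with (i | i) | (_ | _) <;>
    simp [cySign, zpow_ne_zero]

theorem omegaSharp_bijective
    (k : Type*) [Field k] (B : Type*) [AddCommGroup B] [Module k B]
    (N : ℕ) (m : ℤ) (deg : Fin N → ℤ) :
    Function.Bijective (omegaSharp k B N m deg) := by
  rw [Function.bijective_iff_has_inverse]
  refine ⟨fun y i => (cySign k N m deg (cyRot N i))⁻¹ • y (cyRot N i), ?_, ?_⟩
  · intro x
    funext j
    simp only [omegaSharp, LinearMap.coe_mk, AddHom.coe_mk, cyRot_invol]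
    rw [inv_smul_smul₀ (cySign_ne_zero k N m deg _)]
  · intro y
    funext i
    simp only [omegaSharp, LinearMap.coe_mk, AddHom.coe_mk, cyRot_invol]
    rw [smul_inv_smul₀ (cySign_ne_zero k N m deg _)]

end
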